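/- Let f ∈ Λ(X|Y). If there exists N ∈ ℕ such that π^{(k,m)}(f) = 0 for all k ≥ N and all m ≥ N, then f = 0. -/

import Mathlib

open MvPolynomial

attribute [-instance] Finsupp.instMul Finsupp.instMulZeroClass


noncomputable section

/-- Laurent polynomials in `k` variables. -/
abbrev Laur (k : ℕ) : Type := AddMonoidAlgebra ℚ (Fin k →₀ ℤ)

/-- The Laurent monomial `x_i ^ z`. -/
def lX {k : ℕ} (i : Fin k) (z : ℤ) : Laur k :=
  AddMonoidAlgebra.single (Finsupp.single i z) 1

/-- `Λ(X|Y) = Λ ⊗_ℚ Λ`, realized as polynomials in the two families of power sums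
`p_r ⊗ 1 = X (inl (r-1))` and `1 ⊗ p_r = X (inr (r-1))`. -/
abbrev SymF2 : Type := MvPolynomial (ℕ ⊕ ℕ) ℚ

/-- `ℚ[x₁^{±1},…,x_k^{±1}][x_{k+1},…,x_{k+m}]`. -/
abbrev IRing (k m : ℕ) : Type := MvPolynomial (Fin m) (Laur k)

/-- `π^{(k,m)} : Λ(X|Y) → ℚ[x₁^{±1},…,x_k^{±1}][x_{k+1},…,x_{k+m}]`, sending
`p_r ⊗ 1 ↦ Σ_{i=1}^k (x_i^r + x_i^{−r})` and `1 ⊗ p_r ↦ Σ_{j=k+1}^{k+m} x_j^r`. -/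
def piI (k m : ℕ) : SymF2 →ₐ[ℚ] IRing k m :=
  aeval fun s => match s with
    | Sum.inl r => C (∑ i : Fin k, (lX i ((r : ℤ) + 1) + lX i (-((r : ℤ) + 1))))
    | Sum.inr r => ∑ j : Fin m, X j ^ (r + 1)








lemma coeff_pderiv' {R : Type*} [CommSemiring R] {σ : Type*} [DecidableEq σ] (r : σ)
    (m : σ →₀ ℕ) (g : MvPolynomial σ R) :
    coeff m (pderiv r g) = ((m r + 1 : ℕ) : R) * coeff (m + Finsupp.single r 1) g := by
  induction g using MvPolynomial.induction_on' with
  | monomial s a =>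
    rw [pderiv_monomial, coeff_monomial, coeff_monomial]
    by_cases h : s = m + Finsupp.single r 1
    · subst h
      have h1 : m + Finsupp.single r 1 - Finsupp.single r 1 = m := by simp
      have h2 : (m + Finsupp.single r 1 : σ →₀ ℕ) r = m r + 1 := by
        rw [Finsupp.add_apply, Finsupp.single_eq_same]
      rw [if_pos h1, h2]
      simp only [if_true, eq_self_iff_true]
      push_cast; ring
    · rw [if_neg h, mul_zero]
      by_cases h1 : s - Finsupp.single r 1 = m
      · have h2 : s r = 0 := by
          by_contra h2
          apply h
          have : Finsupp.single r 1 ≤ s := by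
            rw [Finsupp.single_le_iff]; omega
          rw [← h1, tsub_add_cancel_of_le this]
        rw [if_pos h1, h2]; simp
      · rw [if_neg h1]
  | add p q hp hq => simp [hp, hq, mul_add]

lemma totalDegree_pderiv_lt' {R : Type*} [CommSemiring R] {σ : Type*} [DecidableEq σ] (r : σ)
    (g : MvPolynomial σ R) (h : 0 < g.totalDegree) :
    (pderiv r g).totalDegree < g.totalDegree := by
  rw [totalDegree, Finset.sup_lt_iff (by simpa using h)]
  intro m hm
  rw [mem_support_iff, coeff_pderiv'] at hm
  have h1 : coeff (m + Finsupp.single r 1) g ≠ 0 := by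
    intro h1; rw [h1, mul_zero] at hm; exact hm rfl
  have h2 := le_totalDegree (mem_support_iff.2 h1)
  have h3 : (m + Finsupp.single r 1).sum (fun _ e => e) = m.sum (fun _ e => e) + 1 := by
    rw [Finsupp.sum_add_index (by simp) (by simp)]
    simp [Finsupp.sum_single_index]
  omega

lemma eq_C_of_pderiv' {A : Type*} [CommRing A] [IsDomain A] [CharZero A] {σ : Type*}
    [DecidableEq σ] (g : MvPolynomial σ A) (h : ∀ r, pderiv r g = 0) :
    g = C (coeff 0 g) := by
  ext d
  rw [coeff_C]
  by_cases hd : (0 : σ →₀ ℕ) = d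
  · rw [if_pos hd, ← hd]
  · rw [if_neg hd]
    have hd' : d ≠ 0 := fun h' => hd h'.symm
    obtain ⟨r, hr⟩ := Finsupp.support_nonempty_iff.2 hd'
    have hle : Finsupp.single r 1 ≤ d := by
      rw [Finsupp.single_le_iff]
      have := Finsupp.mem_support_iff.1 hr
      omega
    have := coeff_pderiv' r (d - Finsupp.single r 1) g
    rw [h r, tsub_add_cancel_of_le hle] at this
    have hne : (((d - Finsupp.single r 1 : σ →₀ ℕ) r + 1 : ℕ) : A) ≠ 0 :=
      Nat.cast_ne_zero.2 (by omega)
    rw [coeff_zero] at this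
    exact (mul_eq_zero.1 this.symm).resolve_left hne

lemma chainD {R B : Type*} [CommRing R] [CommRing B] [Algebra R B] {n : ℕ}
    (D : Derivation R B B) (v : Fin n → B) (g : MvPolynomial (Fin n) R) :
    D (aeval v g) = ∑ r, aeval v (pderiv r g) * D (v r) := by
  induction g using MvPolynomial.induction_on with
  | C a => simp
  | add p q hp hq =>
    simp only [map_add, hp, hq, add_mul, ← Finset.sum_add_distrib]
  | mul_X p s hp =>
    have key : ∀ r : Fin n, aeval v (pderiv r (p * X s)) * D (v r)
        = v s * (aeval v (pderiv r p) * D (v r)) + (if r = s then aeval v p * D (v r) else 0) := by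
      intro r
      rw [pderiv_mul]
      by_cases h : r = s
      · subst h
        rw [if_pos rfl, pderiv_X_self]
        simp only [map_add, map_mul, aeval_X, mul_one, map_one]
        ring
      · rw [if_neg h, pderiv_X_of_ne (Ne.symm h)]
        simp only [map_add, map_mul, aeval_X, mul_zero, map_zero, add_zero]
        ring
    calc D (aeval v (p * X s)) = aeval v p * D (v s) + v s * D (aeval v p) := by
          rw [map_mul, aeval_X, Derivation.leibniz, smul_eq_mul, smul_eq_mul]
      _ = aeval v p * D (v s) + ∑ r, v s * (aeval v (pderiv r p) * D (v r)) := by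
          rw [hp, Finset.mul_sum]
      _ = ∑ r, (v s * (aeval v (pderiv r p) * D (v r)) + if r = s then aeval v p * D (v r) else 0)
          := by
          rw [Finset.sum_add_distrib, Finset.sum_ite_eq' Finset.univ s
            (fun r => aeval v p * D (v r))]
          simp [add_comm]
      _ = ∑ r, aeval v (pderiv r (p * X s)) * D (v r) :=
          Finset.sum_congr rfl fun r _ => (key r).symm
lemma eq_C_of_totalDegree_eq_zero {A : Type*} [CommRing A] {σ : Type*}
    (g : MvPolynomial σ A) (h : g.totalDegree = 0) : g = C (coeff 0 g) := by
  classical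
  ext d
  rw [coeff_C]
  by_cases hd : (0 : σ →₀ ℕ) = d
  · rw [if_pos hd, ← hd]
  · rw [if_neg hd]
    by_contra hc
    obtain ⟨x, hx⟩ := Finsupp.support_nonempty_iff.2 (fun h' => hd h'.symm)
    have := (totalDegree_eq_zero_iff σ g).1 h d (mem_support_iff.2 hc) x
    exact Finsupp.mem_support_iff.1 hx this

lemma lemA {A : Type*} [CommRing A] [IsDomain A] [Algebra ℚ A] {R m : ℕ} (hm : R ≤ m)
    (g : MvPolynomial (Fin R) A)
    (hg : aeval (fun r : Fin R => ∑ j : Fin m, (X j : MvPolynomial (Fin m) A) ^ ((r : ℕ) + 1))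
      g = 0) : g = 0 := by
  haveI : CharZero A := charZero_of_injective_algebraMap (algebraMap ℚ A).injective
  set B := MvPolynomial (Fin m) A with hB
  set v : Fin R → B := fun r => ∑ j : Fin m, (X j : B) ^ ((r : ℕ) + 1) with hv
  have base : ∀ g : MvPolynomial (Fin R) A, g.totalDegree = 0 → aeval v g = 0 → g = 0 := by
    intro g h0 hg
    rw [eq_C_of_totalDegree_eq_zero g h0] at hg ⊢
    rw [aeval_C] at hg
    have : coeff 0 g = 0 := by
      have h2 : (C (coeff 0 g) : B) = 0 := by
        rw [← MvPolynomial.algebraMap_eq]; exact hg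
      simpa using congrArg (MvPolynomial.coeff 0) h2
    rw [this, map_zero]
  suffices H : ∀ N (g : MvPolynomial (Fin R) A), g.totalDegree ≤ N → aeval v g = 0 → g = 0 by
    exact H g.totalDegree g le_rfl hg
  intro N
  induction N with
  | zero => intro g h0 hg; exact base g (Nat.le_zero.1 h0) hg
  | succ N ih =>
    intro g hdeg hg
    by_cases h0 : g.totalDegree = 0
    · exact base g h0 hg
    have hpos : 0 < g.totalDegree := Nat.pos_of_ne_zero h0
    -- derivation argument
    have hDv : ∀ (j : Fin m) (r : Fin R),
        ((X j : B) • pderiv j : Derivation A B B) (v r)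
          = (((r : ℕ) + 1 : ℕ) : B) * (X j : B) ^ ((r : ℕ) + 1) := by
      intro j r
      have : pderiv j (v r) = (((r : ℕ) + 1 : ℕ) : B) * (X j : B) ^ (r : ℕ) := by
        rw [hv]
        simp only [map_sum]
        rw [Finset.sum_eq_single_of_mem j (Finset.mem_univ j)
          (fun t _ ht => by rw [pderiv_pow, pderiv_X_of_ne ht, mul_zero])]
        rw [pderiv_pow, pderiv_X_self, mul_one, Nat.add_sub_cancel]
      show (X j : B) • pderiv j (v r) = _
      rw [this, smul_eq_mul, pow_succ]
      ring
    have hc : ∀ j : Fin m,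
        ∑ r : Fin R, aeval v (pderiv r g) * ((((r : ℕ) + 1 : ℕ) : B) * (X j : B) ^ ((r : ℕ) + 1))
          = 0 := by
      intro j
      have := chainD ((X j : B) • pderiv j : Derivation A B B) v g
      rw [hg, map_zero] at this
      exact (Finset.sum_congr rfl fun r _ => by rw [hDv]).trans this.symm
    -- the polynomial
    set P : Polynomial B := ∑ r : Fin R,
      Polynomial.C (aeval v (pderiv r g) * (((r : ℕ) + 1 : ℕ) : B)) *
        Polynomial.X ^ ((r : ℕ) + 1) with hP
    have hPdeg : P.natDegree ≤ R := by
      apply Polynomial.natDegree_sum_le_of_forall_le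
      intro r _
      exact (Polynomial.natDegree_C_mul_X_pow_le _ _).trans (by omega)
    have hPeval0 : P.eval 0 = 0 := by
      rw [hP]
      simp [Polynomial.eval_finset_sum]
    have hPevalX : ∀ j : Fin m, P.eval (X j : B) = 0 := by
      intro j
      rw [hP, Polynomial.eval_finset_sum, ← hc j]
      exact Finset.sum_congr rfl fun r _ => by
        rw [Polynomial.eval_mul, Polynomial.eval_C, Polynomial.eval_pow, Polynomial.eval_X]
        ring
    have hw : Function.Injective (fun o : Option (Fin m) => Option.elim o (0 : B) X) := by
      intro a b hab
      cases a with
      | none => cases b with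
        | none => rfl
        | some jb => exact absurd hab.symm (X_ne_zero jb)
      | some ja => cases b with
        | none => exact absurd hab (X_ne_zero ja)
        | some jb => exact congrArg _ (X_injective hab)
    have hP0 : P = 0 := by
      apply Polynomial.eq_zero_of_natDegree_lt_card_of_eval_eq_zero P hw
      · intro o
        cases o with
        | none => exact hPeval0
        | some j => exact hPevalX j
      · calc P.natDegree ≤ R := hPdeg
          _ < m + 1 := by omega
          _ = Fintype.card (Option (Fin m)) := by simp
    have hcr : ∀ r : Fin R, aeval v (pderiv r g) = 0 := by
      intro r
      have h1 : P.coeff ((r : ℕ) + 1) = 0 := by rw [hP0]; simp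
      rw [hP, Polynomial.finset_sum_coeff] at h1
      rw [Finset.sum_eq_single_of_mem r (Finset.mem_univ r) (fun b _ hb => by
        rw [Polynomial.coeff_C_mul, Polynomial.coeff_X_pow, if_neg, mul_zero]
        intro hcontra
        exact hb (Fin.ext (by omega)))] at h1
      rw [Polynomial.coeff_C_mul, Polynomial.coeff_X_pow, if_pos rfl, mul_one] at h1
      rcases mul_eq_zero.1 h1 with h2 | h2
      · exact h2
      · exact absurd h2 (Nat.cast_ne_zero.2 (by omega))
    have hpz : ∀ r : Fin R, pderiv r g = 0 := by
      intro r
      apply ih (pderiv r g) _ (hcr r)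
      have := totalDegree_pderiv_lt' r g hpos
      omega
    have hC := eq_C_of_pderiv' g hpz
    exact base g (by rw [hC]; exact totalDegree_C _) hg

instance instDomLaur (k : ℕ) : IsDomain (Laur k) := NoZeroDivisors.to_isDomain _

instance instCharZeroLaur (k : ℕ) : CharZero (Laur k) :=
  charZero_of_injective_algebraMap (algebraMap ℚ (Laur k)).injective

/-- The logarithmic derivative `x_i ∂/∂x_i` on Laurent polynomials, as a linear map. -/
def ldL {k : ℕ} (i : Fin k) : Laur k →ₗ[ℚ] Laur k :=
  (Finsupp.lsum ℚ fun g : Fin k →₀ ℤ =>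
    ((g i : ℚ)) • (AddMonoidAlgebra.lsingle (R := ℚ) g : ℚ →ₗ[ℚ] Laur k)) ∘ₗ
    (AddMonoidAlgebra.coeffLinearEquiv ℚ).toLinearMap

lemma ldL_single {k : ℕ} (i : Fin k) (g : Fin k →₀ ℤ) (c : ℚ) :
    ldL i (AddMonoidAlgebra.single g c) = AddMonoidAlgebra.single g ((g i : ℚ) * c) := by
  have h := Finsupp.lsum_single ℚ
    (fun g : Fin k →₀ ℤ => ((g i : ℚ)) • (AddMonoidAlgebra.lsingle (R := ℚ) g : ℚ →ₗ[ℚ] Laur k)) g c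
  rw [show ((((g i : ℚ)) • (AddMonoidAlgebra.lsingle (R := ℚ) g : ℚ →ₗ[ℚ] Laur k)) c)
      = AddMonoidAlgebra.single g ((g i : ℚ) * c) from by
    rw [LinearMap.smul_apply, AddMonoidAlgebra.lsingle_apply, AddMonoidAlgebra.smul_single,
      smul_eq_mul]] at h
  exact h

/-- The logarithmic derivative as a `ℚ`-derivation. -/
def ldD {k : ℕ} (i : Fin k) : Derivation ℚ (Laur k) (Laur k) where
  toLinearMap := ldL i
  map_one_eq_zero' := by
    have h1 : (1 : Laur k) = AddMonoidAlgebra.single 0 1 := rfl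
    show ldL i 1 = 0
    rw [h1, ldL_single]
    simp
  leibniz' := by
    intro a b
    show ldL i (a * b) = a • ldL i b + b • ldL i a
    induction a using AddMonoidAlgebra.induction_linear with
    | zero => simp
    | add f g hf hg =>
      simp only [add_mul, map_add, hf, hg, add_smul, smul_add]
      abel
    | single ga ca =>
      induction b using AddMonoidAlgebra.induction_linear with
      | zero => simp
      | add f g hf hg =>
        simp only [mul_add, map_add, hf, hg, add_smul, smul_add]
        abel
      | single gb cb =>
        rw [smul_eq_mul, smul_eq_mul, AddMonoidAlgebra.single_mul_single, ldL_single, ldL_single,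
          ldL_single, AddMonoidAlgebra.single_mul_single, AddMonoidAlgebra.single_mul_single,
          show gb + ga = ga + gb from add_comm gb ga, ← AddMonoidAlgebra.single_add, Finsupp.add_apply]
        congr 1
        push_cast
        ring

lemma scal_eq {k : ℕ} (q : ℚ) :
    algebraMap ℚ (Laur k) q = AddMonoidAlgebra.single 0 q := rfl

lemma scal_mul_single {k : ℕ} (q : ℚ) (g : Fin k →₀ ℤ) (c : ℚ) :
    algebraMap ℚ (Laur k) q * AddMonoidAlgebra.single g c = AddMonoidAlgebra.single g (q * c) := by
  rw [scal_eq, AddMonoidAlgebra.single_mul_single, zero_add]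

lemma lX_eq {k : ℕ} (i : Fin k) (z : ℤ) : lX i z = AddMonoidAlgebra.single (Finsupp.single i z) (1 : ℚ) :=
  rfl

lemma lX_mul {k : ℕ} (i : Fin k) (a b : ℤ) : lX i a * lX i b = lX i (a + b) := by
  rw [lX_eq, lX_eq, lX_eq, AddMonoidAlgebra.single_mul_single, Finsupp.single_add, one_mul]

lemma lX_pow {k : ℕ} (i : Fin k) (n : ℕ) : lX i 1 ^ n = lX i (n : ℤ) := by
  induction n with
  | zero =>
    rw [pow_zero, lX_eq]
    norm_num
    rfl
  | succ n ih =>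
    rw [pow_succ, ih, lX_mul]
    push_cast
    ring_nf

lemma ldD_lX {k : ℕ} (i j : Fin k) (z : ℤ) :
    ldD i (lX j z) = if j = i then algebraMap ℚ (Laur k) ((z : ℚ)) * lX j z else 0 := by
  show ldL i (lX j z) = _
  rw [lX_eq, ldL_single, Finsupp.single_apply]
  split_ifs with h
  · rw [scal_mul_single]
  · simp

lemma lX_injective {k : ℕ} : Function.Injective (fun i : Fin k => lX i 1) := by
  intro a b hab
  have h1 : (Finsupp.single a (1 : ℤ)) = Finsupp.single b 1 :=
    AddMonoidAlgebra.single_left_injective (one_ne_zero) (by exact hab)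
  exact Finsupp.single_left_injective (one_ne_zero) h1

lemma lemB {R k : ℕ} (hk : 2 * R + 2 ≤ k) (g : MvPolynomial (Fin R) ℚ)
    (hg : aeval (fun r : Fin R =>
      ∑ i : Fin k, (lX i (((r : ℕ) : ℤ) + 1) + lX i (-(((r : ℕ) : ℤ) + 1)))) g = 0) :
    g = 0 := by
  set v : Fin R → Laur k := fun r =>
    ∑ i : Fin k, (lX i (((r : ℕ) : ℤ) + 1) + lX i (-(((r : ℕ) : ℤ) + 1))) with hv
  have base : ∀ g : MvPolynomial (Fin R) ℚ, g.totalDegree = 0 → aeval v g = 0 → g = 0 := by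
    intro g h0 hgg
    rw [eq_C_of_totalDegree_eq_zero g h0] at hgg ⊢
    rw [aeval_C] at hgg
    have : coeff 0 g = 0 := (algebraMap ℚ (Laur k)).injective (by rw [map_zero]; exact hgg)
    rw [this, map_zero]
  suffices H : ∀ N (g : MvPolynomial (Fin R) ℚ), g.totalDegree ≤ N → aeval v g = 0 → g = 0 by
    exact H g.totalDegree g le_rfl hg
  intro N
  induction N with
  | zero => intro g h0 hgg; exact base g (Nat.le_zero.1 h0) hgg
  | succ N ih =>
    intro g hdeg hgg
    by_cases h0 : g.totalDegree = 0
    · exact base g h0 hgg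
    have hpos : 0 < g.totalDegree := Nat.pos_of_ne_zero h0
    set c : Fin R → Laur k := fun r => aeval v (pderiv r g) with hcdef
    set w : Fin R → Laur k := fun r => algebraMap ℚ (Laur k) (((r : ℕ) : ℚ) + 1) with hwdef
    have hDv : ∀ (i : Fin k) (r : Fin R),
        ldD i (v r) = w r * (lX i (((r : ℕ) : ℤ) + 1) - lX i (-(((r : ℕ) : ℤ) + 1))) := by
      intro i r
      rw [hv]
      show ldD i (∑ t : Fin k, (lX t (((r : ℕ) : ℤ) + 1) + lX t (-(((r : ℕ) : ℤ) + 1)))) = _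
      rw [map_sum]
      rw [Finset.sum_eq_single_of_mem i (Finset.mem_univ i) (fun t _ ht => by
        rw [map_add, ldD_lX, ldD_lX, if_neg ht, if_neg ht, add_zero])]
      rw [map_add, ldD_lX, ldD_lX, if_pos rfl, if_pos rfl, hwdef]
      push_cast
      ring
    have hc : ∀ i : Fin k, ∑ r : Fin R,
        c r * (w r * (lX i (((r : ℕ) : ℤ) + 1) - lX i (-(((r : ℕ) : ℤ) + 1)))) = 0 := by
      intro i
      have hch := chainD (ldD i) v g
      rw [hgg, map_zero] at hch
      exact (Finset.sum_congr rfl fun r _ => by rw [hcdef, hDv]).trans hch.symm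
    set P : Polynomial (Laur k) := ∑ r : Fin R,
      Polynomial.C (c r * w r) *
        (Polynomial.X ^ (R + (r : ℕ) + 2) - Polynomial.X ^ (R - (r : ℕ))) with hPdef
    have hPdeg : P.natDegree ≤ 2 * R + 1 := by
      apply Polynomial.natDegree_sum_le_of_forall_le
      intro r _
      apply (Polynomial.natDegree_C_mul_le _ _).trans
      apply (Polynomial.natDegree_sub_le _ _).trans
      rw [Polynomial.natDegree_X_pow, Polynomial.natDegree_X_pow]
      have := r.isLt
      omega
    have hPeval : ∀ i : Fin k, P.eval (lX i 1) = 0 := by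
      intro i
      have expand : P.eval (lX i 1) = lX i ((R : ℤ) + 1) * ∑ r : Fin R,
          c r * (w r * (lX i (((r : ℕ) : ℤ) + 1) - lX i (-(((r : ℕ) : ℤ) + 1)))) := by
        rw [hPdef, Polynomial.eval_finset_sum, Finset.mul_sum]
        refine Finset.sum_congr rfl fun r _ => ?_
        rw [Polynomial.eval_mul, Polynomial.eval_C, Polynomial.eval_sub, Polynomial.eval_pow,
          Polynomial.eval_pow, Polynomial.eval_X, lX_pow, lX_pow]
        have e1 : ((R + (r : ℕ) + 2 : ℕ) : ℤ) = ((R : ℤ) + 1) + ((((r : ℕ) : ℤ)) + 1) := by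
          push_cast; ring
        have e2 : ((R - (r : ℕ) : ℕ) : ℤ) = ((R : ℤ) + 1) + (-((((r : ℕ) : ℤ)) + 1)) := by
          rw [Nat.cast_sub (Nat.le_of_lt r.isLt)]; push_cast; ring
        rw [e1, e2, ← lX_mul i ((R : ℤ) + 1) ((((r : ℕ) : ℤ)) + 1),
          ← lX_mul i ((R : ℤ) + 1) (-((((r : ℕ) : ℤ)) + 1))]
        ring
      rw [expand, hc i, mul_zero]
    have hP0 : P = 0 := by
      apply Polynomial.eq_zero_of_natDegree_lt_card_of_eval_eq_zero P lX_injective hPeval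
      rw [Fintype.card_fin]
      omega
    have hcr : ∀ r : Fin R, aeval v (pderiv r g) = 0 := by
      intro r
      have h1 : P.coeff (R + (r : ℕ) + 2) = 0 := by rw [hP0, Polynomial.coeff_zero]
      rw [hPdef, Polynomial.finset_sum_coeff] at h1
      rw [Finset.sum_eq_single_of_mem r (Finset.mem_univ r) (fun b _ hb => by
        rw [Polynomial.coeff_C_mul, Polynomial.coeff_sub, Polynomial.coeff_X_pow,
          Polynomial.coeff_X_pow, if_neg (fun hcon => hb (Fin.ext (by omega))),
          if_neg (by have := b.isLt; omega), sub_zero, mul_zero])] at h1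
      rw [Polynomial.coeff_C_mul, Polynomial.coeff_sub, Polynomial.coeff_X_pow,
        Polynomial.coeff_X_pow, if_pos rfl, if_neg (by have := r.isLt; omega), sub_zero,
        mul_one] at h1
      rcases mul_eq_zero.1 h1 with h2 | h2
      · rw [hcdef] at h2; exact h2
      · exfalso
        rw [hwdef] at h2
        have hq : (((r : ℕ) : ℚ) + 1) ≠ 0 := by positivity
        exact hq ((algebraMap ℚ (Laur k)).injective (by rw [map_zero]; exact h2))
    have hpz : ∀ r : Fin R, pderiv r g = 0 := by
      intro r
      apply ih (pderiv r g) _ (hcr r)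
      have := totalDegree_pderiv_lt' r g hpos
      omega
    have hC := eq_C_of_pderiv' g hpz
    exact base g (by rw [hC]; exact totalDegree_C _) hgg

lemma lemAinf {A : Type*} [CommRing A] [IsDomain A] [Algebra ℚ A] {m : ℕ}
    (g : MvPolynomial ℕ A) (hvars : ∀ r ∈ g.vars, r < m)
    (hg : aeval (fun r : ℕ => ∑ j : Fin m, (X j : MvPolynomial (Fin m) A) ^ (r + 1)) g = 0) :
    g = 0 := by
  have hsup : g ∈ supported A {x : ℕ | x < m} :=
    mem_supported.2 (fun x hx => hvars x (by simpa using hx))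
  rw [supported_eq_range_rename] at hsup
  obtain ⟨g₀, hg₀⟩ := hsup
  set g₁ : MvPolynomial (Fin m) A :=
    rename (fun x : {x : ℕ // x ∈ {x : ℕ | x < m}} => (⟨x.1, x.2⟩ : Fin m)) g₀ with hg₁
  have hren : rename (fun j : Fin m => (j : ℕ)) g₁ = g := by
    rw [hg₁, rename_rename]
    exact hg₀
  have hg1 : aeval (fun r : Fin m => ∑ j : Fin m, (X j : MvPolynomial (Fin m) A) ^ ((r : ℕ) + 1))
      g₁ = 0 := by
    have := hg
    rw [← hren, aeval_rename] at this
    exact this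
  have := lemA (le_refl m) g₁ hg1
  rw [← hren, this, map_zero]

lemma lemBinf {R k : ℕ} (hk : 2 * R + 2 ≤ k) (g : MvPolynomial ℕ ℚ)
    (hvars : ∀ r ∈ g.vars, r < R)
    (hg : aeval (fun r : ℕ =>
      ∑ i : Fin k, (lX i ((r : ℤ) + 1) + lX i (-((r : ℤ) + 1)))) g = 0) :
    g = 0 := by
  have hsup : g ∈ supported ℚ {x : ℕ | x < R} :=
    mem_supported.2 (fun x hx => hvars x (by simpa using hx))
  rw [supported_eq_range_rename] at hsup
  obtain ⟨g₀, hg₀⟩ := hsup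
  set g₁ : MvPolynomial (Fin R) ℚ :=
    rename (fun x : {x : ℕ // x ∈ {x : ℕ | x < R}} => (⟨x.1, x.2⟩ : Fin R)) g₀ with hg₁
  have hren : rename (fun j : Fin R => (j : ℕ)) g₁ = g := by
    rw [hg₁, rename_rename]
    exact hg₀
  have hg1 : aeval (fun r : Fin R =>
      ∑ i : Fin k, (lX i (((r : ℕ) : ℤ) + 1) + lX i (-(((r : ℕ) : ℤ) + 1)))) g₁ = 0 := by
    have := hg
    rw [← hren, aeval_rename] at this
    exact this
  have := lemB hk g₁ hg1
  rw [← hren, this, map_zero]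

/-- If `π^{(k,m)}(f) = 0` for all large `k` and `m`, then `f = 0`. -/
theorem piI_eventually_zero_imp_zero (f : SymF2)
    (h : ∃ N : ℕ, ∀ k : ℕ, N ≤ k → ∀ m : ℕ, N ≤ m → piI k m f = 0) : f = 0 := by
  classical
  obtain ⟨N, hN⟩ := h
  set F : MvPolynomial ℕ (MvPolynomial ℕ ℚ) := sumToIter ℚ ℕ ℕ (rename Sum.swap f) with hF
  set m : ℕ := max N (F.vars.sup id + 1) with hm
  set RX : ℕ := (F.support.sup fun d => (F.coeff d).vars.sup id) + 1 with hRX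
  set k : ℕ := max N (2 * RX + 2) with hk
  set βk : MvPolynomial ℕ ℚ →ₐ[ℚ] Laur k :=
    aeval (fun r : ℕ => ∑ i : Fin k, (lX i ((r : ℤ) + 1) + lX i (-((r : ℤ) + 1)))) with hβk
  have hfk : piI k m f = 0 := hN k (le_max_left _ _) m (le_max_left _ _)
  -- the factorization identity
  have hid : piI k m f =
      aeval (fun r : ℕ => ∑ j : Fin m, (X j : IRing k m) ^ (r + 1))
        (MvPolynomial.map βk.toRingHom F) := by
    rw [hF]
    have hhom : (piI k m).toRingHom =
        ((aeval (R := Laur k)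
            (fun r : ℕ => ∑ j : Fin m, (X j : IRing k m) ^ (r + 1))).toRingHom.comp
          ((MvPolynomial.map βk.toRingHom).comp
            ((sumToIter ℚ ℕ ℕ).comp (rename (R := ℚ) Sum.swap).toRingHom))) := by
      apply MvPolynomial.ringHom_ext
      · intro q
        simp only [RingHom.coe_comp, Function.comp_apply, AlgHom.toRingHom_eq_coe,
          RingHom.coe_coe]
        rw [rename_C, sumToIter_C, MvPolynomial.map_C]
        simp only [AlgHom.toRingHom_eq_coe, RingHom.coe_coe]
        rw [aeval_C, hβk, aeval_C]
        exact ((piI k m).commutes q).trans (IsScalarTower.algebraMap_apply ℚ (Laur k) (IRing k m) q)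
      · intro s
        cases s with
        | inl r =>
          simp only [RingHom.coe_comp, Function.comp_apply, AlgHom.toRingHom_eq_coe,
            RingHom.coe_coe]
          rw [rename_X, Sum.swap_inl, sumToIter_Xr, MvPolynomial.map_C]
          simp only [AlgHom.toRingHom_eq_coe, RingHom.coe_coe]
          rw [aeval_C, hβk, aeval_X, MvPolynomial.algebraMap_eq]
          exact aeval_X _ _
        | inr r =>
          simp only [RingHom.coe_comp, Function.comp_apply, AlgHom.toRingHom_eq_coe,
            RingHom.coe_coe]
          rw [rename_X, Sum.swap_inr, sumToIter_Xl, MvPolynomial.map_X, aeval_X]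
          exact aeval_X _ _
    have := congrArg (fun φ : SymF2 →+* IRing k m => φ f) hhom
    simpa using this
  have hmap0 : MvPolynomial.map βk.toRingHom F = 0 := by
    apply lemAinf (m := m) (MvPolynomial.map βk.toRingHom F)
    · intro r hr
      have h1 : r ∈ F.vars := vars_map _ _ hr
      have h2 : r ≤ F.vars.sup id := Finset.le_sup (f := id) h1
      have hmle : F.vars.sup id + 1 ≤ m := by rw [hm]; exact le_max_right _ _
      omega
    · rw [← hid]; exact hfk
  have hF0 : F = 0 := by
    apply MvPolynomial.ext
    intro d
    by_cases hd : d ∈ F.support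
    · have hco : βk (F.coeff d) = 0 := by
        have := congrArg (fun p => MvPolynomial.coeff d p) hmap0
        simpa [MvPolynomial.coeff_map] using this
      have hvars : ∀ r ∈ (F.coeff d).vars, r < RX := by
        intro r hr
        have h2 : r ≤ (F.coeff d).vars.sup id := Finset.le_sup (f := id) hr
        have h3 : (F.coeff d).vars.sup id ≤ F.support.sup fun d => (F.coeff d).vars.sup id :=
          Finset.le_sup (f := fun d => (F.coeff d).vars.sup id) hd
        omega
      have := lemBinf (R := RX) (k := k)
        (show 2 * RX + 2 ≤ k by rw [hk]; exact le_max_right _ _) (F.coeff d) hvars hco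
      rw [this, coeff_zero]
    · rw [coeff_zero]
      exact notMem_support_iff.1 hd
  have hswap : rename Sum.swap f = 0 := by
    have heq : ∀ p : SymF2, sumToIter ℚ ℕ ℕ p = sumRingEquiv ℚ ℕ ℕ p := fun p => by
      have hh : sumToIter ℚ ℕ ℕ =
          (sumRingEquiv ℚ ℕ ℕ : SymF2 →+* MvPolynomial ℕ (MvPolynomial ℕ ℚ)) := by
        apply MvPolynomial.ringHom_ext
        · intro q; simp [sumToIter_C]
        · intro s; cases s <;> simp [sumToIter_Xl, sumToIter_Xr]
      rw [hh]; rfl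
    have hinj : Function.Injective (sumToIter ℚ ℕ ℕ) := by
      intro a b hab
      apply (sumRingEquiv ℚ ℕ ℕ).injective
      rw [← heq, ← heq]; exact hab
    apply hinj
    rw [map_zero, ← hF]
    exact hF0
  have h2 := congrArg (rename (Sum.swap : ℕ ⊕ ℕ → ℕ ⊕ ℕ)) hswap
  rw [rename_rename, map_zero] at h2
  rw [show (Sum.swap ∘ Sum.swap : ℕ ⊕ ℕ → ℕ ⊕ ℕ) = id from funext (fun s => Sum.swap_swap s)]
    at h2
  rwa [rename_id] at h2


end
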